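/- arXiv:1209.3451 — 5 statements merged into one kernel-verified Lean document; each statement's English description precedes it below -/
import Mathlib

section
/- For every h > 0, every real X, and every H > 0, the point z = X + iH satisfies |1 + i·tan(πz/h)| ≤ 2e^{-2πH/h}/(1 − e^{-2πH/h}). -/
theorem stmt_0 (h X H : ℝ) (hh : 0 < h) (hH : 0 < H) :
    ‖1 + Complex.I *
        Complex.tan ((Real.pi : ℂ) * ((X : ℂ) + (H : ℂ) * Complex.I) / (h : ℂ))‖ ≤
      2 * Real.exp (-2 * Real.pi * H / h) / (1 - Real.exp (-2 * Real.pi * H / h)) := by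
  set w : ℂ := (Real.pi : ℂ) * ((X : ℂ) + (H : ℂ) * Complex.I) / (h : ℂ) with hw
  set t : ℝ := Real.pi * H / h with hts
  have ht : (0:ℝ) < t := by positivity
  have hhne : (h:ℂ) ≠ 0 := by exact_mod_cast ne_of_gt hh
  have him : w.im = t := by
    rw [hw]
    simp [Complex.div_im, Complex.mul_im, Complex.mul_re, Complex.normSq, hts]
    field_simp
  have h1 : ‖Complex.exp (w * Complex.I)‖ = Real.exp (-t) := by
    rw [Complex.norm_exp]
    simp [Complex.mul_re, him]
  have h2 : ‖Complex.exp (-(w * Complex.I))‖ = Real.exp t := by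
    rw [Complex.norm_exp]
    simp [Complex.mul_re, him]
  have hcoseq : Complex.cos w = (Complex.exp (w * Complex.I) + Complex.exp (-(w * Complex.I))) / 2 := by
    simp [Complex.cos, neg_mul]
  have hcoslb : (Real.exp t - Real.exp (-t)) / 2 ≤ ‖Complex.cos w‖ := by
    rw [hcoseq, norm_div]
    simp only [Complex.norm_two]
    have habs : Real.exp t - Real.exp (-t) ≤ ‖Complex.exp (w * Complex.I) + Complex.exp (-(w * Complex.I))‖ := by
      calc Real.exp t - Real.exp (-t)
          = ‖Complex.exp (-(w * Complex.I))‖ - ‖Complex.exp (w * Complex.I)‖ := by rw [h1, h2]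
        _ ≤ ‖Complex.exp (-(w * Complex.I)) + Complex.exp (w * Complex.I)‖ := by
            have h3 := norm_add_le (Complex.exp (-(w * Complex.I)) + Complex.exp (w * Complex.I)) (-(Complex.exp (w * Complex.I)))
            simp only [add_neg_cancel_right] at h3
            rw [norm_neg] at h3
            linarith
        _ = _ := by rw [add_comm]
    linarith
  have hd : (0:ℝ) < (Real.exp t - Real.exp (-t)) / 2 := by
    have : Real.exp (-t) < Real.exp t := Real.exp_lt_exp.mpr (by linarith)
    linarith
  have hcosne : Complex.cos w ≠ 0 := by
    intro hc
    rw [hc] at hcoslb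
    simp at hcoslb
    linarith
  have key : 1 + Complex.I * Complex.tan w = Complex.exp (w * Complex.I) / Complex.cos w := by
    rw [Complex.tan_eq_sin_div_cos, Complex.exp_mul_I]
    field_simp
  rw [key, norm_div, h1]
  have hq : Real.exp (-(2*t)) = Real.exp (-t) * Real.exp (-t) := by
    rw [← Real.exp_add]; ring_nf
  have hq1 : Real.exp (-(2*t)) < 1 := Real.exp_lt_one_iff.mpr (by linarith)
  have heq : -2 * Real.pi * H / h = -(2*t) := by rw [hts]; ring
  rw [heq]
  have step1 : Real.exp (-t) / ‖Complex.cos w‖ ≤ Real.exp (-t) / ((Real.exp t - Real.exp (-t)) / 2) :=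
    div_le_div_of_nonneg_left (Real.exp_nonneg _) hd hcoslb
  refine step1.trans (le_of_eq ?_)
  have hee : Real.exp t * Real.exp (-t) = 1 := by rw [← Real.exp_add]; simp
  have hDne : Real.exp t - Real.exp (-t) ≠ 0 := by intro hc; rw [hc] at hd; simp at hd
  have hden : 1 - Real.exp (-(2*t)) = Real.exp (-t) * (Real.exp t - Real.exp (-t)) := by
    rw [hq, mul_sub, mul_comm (Real.exp (-t)) (Real.exp t), hee]
  rw [hden, hq]
  field_simp
end

section
/- Let x > 0 and h > 0 with x ≠ √2·π/h, and set H := π/h. Then the integral J_H := ∫_{X ∈ ℝ} f(X + iH)·(1 + i·tan(π(X + iH)/h)) dX satisfies |J_H| ≤ x·e^{-π²/h²} / (√π · |π²/h² − x²/2| · (1 − e^{-2π²/h²})). -/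
open Complex MeasureTheory


noncomputable section

lemma tan_bound (w : ℂ) (m : ℝ) (hm : 0 < m) (him : w.im = m) :
    ‖1 + I * Complex.tan w‖ ≤ 2 / (Real.exp (2*m) - 1) := by
  have hcos : Complex.cos w ≠ 0 := by
    intro h0
    obtain ⟨k, hk⟩ := Complex.cos_eq_zero_iff.mp h0
    have : w.im = 0 := by rw [hk]; simp
    rw [him] at this; linarith
  have hid : 1 + I * Complex.tan w = Complex.exp (w * I) / Complex.cos w := by
    rw [Complex.tan_eq_sin_div_cos, Complex.exp_mul_I]
    field_simp
  have habs1 : ‖Complex.exp (w * I)‖ = Real.exp (-m) := by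
    rw [Complex.norm_exp]; congr 1; simp [him]
  have habs2 : ‖Complex.exp (-(w * I))‖ = Real.exp m := by
    rw [Complex.norm_exp]; congr 1; simp [him]
  have hcosket : Complex.cos w = (Complex.exp (w*I) + Complex.exp (-(w*I))) / 2 := by
    rw [Complex.cos]; ring_nf
  have hexpm : Real.exp (-m) < Real.exp m := Real.exp_lt_exp.mpr (by linarith)
  have hden : 0 < (Real.exp m - Real.exp (-m)) / 2 := by linarith
  have hcoslb : (Real.exp m - Real.exp (-m)) / 2 ≤ ‖Complex.cos w‖ := by
    rw [hcosket, norm_div]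
    simp only [Complex.norm_two]
    apply div_le_div_of_nonneg_right ?_ (by norm_num)
    calc Real.exp m - Real.exp (-m)
        = ‖Complex.exp (-(w*I))‖ - ‖Complex.exp (w*I)‖ := by
          rw [habs1, habs2]
      _ ≤ ‖Complex.exp (w*I) + Complex.exp (-(w*I))‖ := by
          have := norm_sub_norm_le (Complex.exp (-(w*I))) (-(Complex.exp (w*I)))
          simpa [add_comm, sub_neg_eq_add] using this
  rw [hid, norm_div, habs1]
  have heq : Real.exp (-m) / ((Real.exp m - Real.exp (-m)) / 2) = 2 / (Real.exp (2*m) - 1) := by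
    rw [two_mul, Real.exp_add, Real.exp_neg]
    have h1 : Real.exp m ≠ 0 := Real.exp_ne_zero m
    have h2 : Real.exp m - (Real.exp m)⁻¹ ≠ 0 := by
      rw [← Real.exp_neg]; linarith
    have h4 : 1 < Real.exp m := by
      rw [← Real.exp_zero]; exact Real.exp_lt_exp.mpr hm
    have h3 : Real.exp m * Real.exp m - 1 ≠ 0 := by nlinarith
    field_simp
  rw [← heq]
  gcongr


lemma denom_lb (x Hr X : ℝ) (hx : 0 < x) (hH : 0 < Hr) :
    |Hr^2 - x^2/2| ≤ ‖(x:ℂ)^2 + I * ((X:ℂ) + (Hr:ℂ)*I)^2‖ := by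
  set c : ℝ := x / Real.sqrt 2 with hc
  have hc0 : 0 < c := div_pos hx (Real.sqrt_pos.mpr (by norm_num))
  have hc2 : c^2 = x^2/2 := by
    rw [hc, div_pow, Real.sq_sqrt (by norm_num : (0:ℝ) ≤ 2)]
  have hcc : ((c:ℂ))^2 = ((x:ℂ))^2/2 := by exact_mod_cast congrArg (fun t : ℝ => (t:ℂ)) hc2
  set z : ℂ := (X:ℂ) + (Hr:ℂ)*I with hz
  set w : ℂ := (c:ℂ) + (c:ℂ)*I with hw
  have hw2 : w^2 = (x:ℂ)^2 * I := by
    rw [hw]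
    linear_combination (2*Complex.I) * hcc + ((c:ℂ))^2 * Complex.I_sq
  have hfact : (x:ℂ)^2 + I * z^2 = I * (z - w) * (z + w) := by
    linear_combination Complex.I * hw2 + (x:ℂ)^2 * Complex.I_sq
  rw [hfact]
  rw [norm_mul, norm_mul, Complex.norm_I, one_mul]
  have him1 : (z - w).im = Hr - c := by simp [hz, hw]
  have him2 : (z + w).im = Hr + c := by simp [hz, hw]
  have h1 : |Hr - c| ≤ ‖z - w‖ := him1 ▸ Complex.abs_im_le_norm (z - w)
  have h2 : Hr + c ≤ ‖z + w‖ := by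
    calc Hr + c ≤ |Hr + c| := le_abs_self _
      _ ≤ _ := him2 ▸ Complex.abs_im_le_norm (z + w)
  calc |Hr^2 - x^2/2| = |(Hr - c) * (Hr + c)| := by rw [← hc2]; congr 1; ring
    _ = |Hr - c| * |Hr + c| := abs_mul _ _
    _ = |Hr - c| * (Hr + c) := by rw [abs_of_pos (show (0:ℝ) < Hr + c by positivity)]
    _ ≤ ‖z - w‖ * ‖z + w‖ :=
        mul_le_mul h1 h2 (by positivity) (norm_nonneg _)



/-- The integrand `f(z) = e^{i(x² + π/4)} · (x/(2π)) · e^{-z²}/(x² + i z²)` for fixed `x`. -/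
def f (x : ℝ) (z : ℂ) : ℂ :=
  Complex.exp (Complex.I * ((x : ℂ) ^ 2 + (Real.pi / 4 : ℂ))) * ((x : ℂ) / (2 * Real.pi : ℂ)) *
    Complex.exp (-z ^ 2) / ((x : ℂ) ^ 2 + Complex.I * z ^ 2)

theorem stmt_1 (x h : ℝ) (hx : 0 < x) (hh : 0 < h)
    (hne : x ≠ Real.sqrt 2 * Real.pi / h) :
    ‖∫ X : ℝ, f x ((X : ℂ) + (Real.pi / h : ℂ) * Complex.I) *
        (1 + Complex.I * Complex.tan ((Real.pi : ℂ) *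
          ((X : ℂ) + (Real.pi / h : ℂ) * Complex.I) / (h : ℂ)))‖ ≤
      x * Real.exp (-Real.pi ^ 2 / h ^ 2) /
        (Real.sqrt Real.pi * |Real.pi ^ 2 / h ^ 2 - x ^ 2 / 2| *
          (1 - Real.exp (-2 * Real.pi ^ 2 / h ^ 2))) := by
  have hπ : (0:ℝ) < Real.pi := Real.pi_pos
  set H : ℝ := Real.pi / h with hH
  have hH0 : 0 < H := div_pos hπ hh
  have hH2 : H ^ 2 = Real.pi ^ 2 / h ^ 2 := div_pow _ _ _
  -- the pole is off the line
  have hDne : H ^ 2 - x ^ 2 / 2 ≠ 0 := by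
    intro he
    apply hne
    rw [mul_div_assoc, ← hH]
    have hxx : x ^ 2 = 2 * H ^ 2 := by linarith
    calc x = Real.sqrt (x ^ 2) := (Real.sqrt_sq hx.le).symm
      _ = Real.sqrt (2 * H ^ 2) := by rw [hxx]
      _ = Real.sqrt 2 * H := by
          rw [Real.sqrt_mul (by norm_num), Real.sqrt_sq hH0.le]
  set D : ℝ := |H ^ 2 - x ^ 2 / 2| with hD
  have hD0 : 0 < D := abs_pos.mpr hDne
  have hu1 : (1:ℝ) < Real.exp (H ^ 2) := by
    rw [← Real.exp_zero]; exact Real.exp_lt_exp.mpr (by positivity)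
  have hE1 : Real.exp (-(2 * H ^ 2)) < 1 := by
    rw [← Real.exp_zero]; exact Real.exp_lt_exp.mpr (by nlinarith)
  set C : ℝ := x * Real.exp (-H ^ 2) / (Real.pi * D * (1 - Real.exp (-(2 * H ^ 2)))) with hC
  -- the pointwise bound
  have key : ∀ X : ℝ, ‖f x ((X : ℂ) + (H : ℂ) * Complex.I) *
      (1 + Complex.I * Complex.tan ((Real.pi : ℂ) *
        ((X : ℂ) + (H : ℂ) * Complex.I) / (h : ℂ)))‖ ≤ C * Real.exp (-X ^ 2) := by
    intro X
    set z : ℂ := (X : ℂ) + (H : ℂ) * Complex.I with hz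
    set w : ℂ := (Real.pi : ℂ) * z / (h : ℂ) with hw
    have hwim : w.im = H ^ 2 := by
      have hw' : w = ((Real.pi / h : ℝ) : ℂ) * z := by rw [hw]; push_cast; ring
      have hzim : z.im = H := by simp [hz]
      rw [hw']
      simp [Complex.mul_im, hzim]
      rw [← hH]; ring
    -- |f x z| ≤ (x/(2π)) e^{H²-X²} / D
    have habsf : ‖f x z‖ ≤ x / (2 * Real.pi) * Real.exp (H ^ 2 - X ^ 2) / D := by
      unfold f
      rw [norm_div, norm_mul, norm_mul]
      have h1 : ‖Complex.exp (Complex.I * ((x : ℂ) ^ 2 + (Real.pi / 4 : ℂ)))‖ = 1 := by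
        rw [Complex.norm_exp]; simp [← Complex.ofReal_pow]
      have h2 : ‖(x : ℂ) / (2 * Real.pi : ℂ)‖ = x / (2 * Real.pi) := by
        rw [norm_div, norm_mul, Complex.norm_real, Complex.norm_two, Complex.norm_real,
          Real.norm_eq_abs, Real.norm_eq_abs,
          abs_of_pos hx, abs_of_pos hπ]
      have h3 : ‖Complex.exp (-z ^ 2)‖ = Real.exp (H ^ 2 - X ^ 2) := by
        rw [Complex.norm_exp]; congr 1
        simp [hz, Complex.mul_re, pow_two]
      have h4 : D ≤ ‖(x : ℂ) ^ 2 + Complex.I * z ^ 2‖ := by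
        rw [hD, hz]; exact denom_lb x H X hx hH0
      rw [h1, h2, h3, one_mul]
      gcongr
    have htan : ‖1 + Complex.I * Complex.tan w‖ ≤
        2 / (Real.exp (2 * H ^ 2) - 1) :=
      tan_bound w (H ^ 2) (by positivity) hwim
    rw [norm_mul]
    calc ‖f x z‖ * ‖1 + Complex.I * Complex.tan w‖
        ≤ (x / (2 * Real.pi) * Real.exp (H ^ 2 - X ^ 2) / D) *
            (2 / (Real.exp (2 * H ^ 2) - 1)) := by
          apply mul_le_mul habsf htan (norm_nonneg _) (by positivity)
      _ = C * Real.exp (-X ^ 2) := by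
          rw [hC]
          have e1 : Real.exp (H ^ 2 - X ^ 2) = Real.exp (H ^ 2) * Real.exp (-X ^ 2) := by
            rw [← Real.exp_add]; ring_nf
          have e2 : Real.exp (2 * H ^ 2) = Real.exp (H ^ 2) * Real.exp (H ^ 2) := by
            rw [← Real.exp_add]; ring_nf
          have e3 : Real.exp (-H ^ 2) = (Real.exp (H ^ 2))⁻¹ := by
            rw [← Real.exp_neg]
          have e4 : Real.exp (-(2 * H ^ 2)) = (Real.exp (H ^ 2) * Real.exp (H ^ 2))⁻¹ := by
            rw [← e2, ← Real.exp_neg]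
          rw [e1, e2, e3, e4]
          have hu0 : Real.exp (H ^ 2) ≠ 0 := (Real.exp_pos _).ne'
          have hu2 : Real.exp (H ^ 2) * Real.exp (H ^ 2) - 1 ≠ 0 := by nlinarith
          have hu3 : 1 - (Real.exp (H ^ 2) * Real.exp (H ^ 2))⁻¹ ≠ 0 := by
            have : (Real.exp (H ^ 2) * Real.exp (H ^ 2))⁻¹ < 1 := by
              rw [inv_lt_one_iff₀]; right; nlinarith
            linarith
          field_simp
  -- integrate
  have hint : Integrable (fun X : ℝ => C * Real.exp (-X ^ 2)) := by
    have := (integrable_exp_neg_mul_sq (show (0:ℝ) < 1 by norm_num)).const_mul C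
    simpa using this
  rw [show ((Real.pi : ℂ) / (h : ℂ)) = ((H : ℝ) : ℂ) from by rw [hH]; push_cast; ring]
  calc ‖∫ X : ℝ, f x ((X : ℂ) + (H : ℂ) * Complex.I) *
        (1 + Complex.I * Complex.tan ((Real.pi : ℂ) *
          ((X : ℂ) + (H : ℂ) * Complex.I) / (h : ℂ)))‖
      ≤ ∫ X : ℝ, C * Real.exp (-X ^ 2) :=
        norm_integral_le_of_norm_le hint (Filter.Eventually.of_forall key)
    _ = C * Real.sqrt Real.pi := by
        rw [MeasureTheory.integral_const_mul]
        have := integral_gaussian 1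
        simp only [neg_mul, one_mul, div_one] at this
        rw [this]
    _ ≤ x * Real.exp (-Real.pi ^ 2 / h ^ 2) /
        (Real.sqrt Real.pi * |Real.pi ^ 2 / h ^ 2 - x ^ 2 / 2| *
          (1 - Real.exp (-2 * Real.pi ^ 2 / h ^ 2))) := by
        have e1 : -Real.pi ^ 2 / h ^ 2 = -H ^ 2 := by rw [hH2]; ring
        have e2 : -2 * Real.pi ^ 2 / h ^ 2 = -(2 * H ^ 2) := by rw [hH2]; ring
        rw [e1, e2, ← hH2, ← hD, hC]
        have hsq : Real.sqrt Real.pi * Real.sqrt Real.pi = Real.pi :=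
          Real.mul_self_sqrt hπ.le
        have hs0 : (0:ℝ) < Real.sqrt Real.pi := Real.sqrt_pos.mpr hπ
        have hE0 : (0:ℝ) < 1 - Real.exp (-(2 * H ^ 2)) := by linarith
        rw [div_mul_eq_mul_div, le_div_iff₀ (mul_pos (mul_pos hs0 hD0) hE0)]
        rw [div_mul_eq_mul_div, div_le_iff₀ (mul_pos (mul_pos hπ hD0) hE0)]
        apply le_of_eq
        linear_combination (x * Real.exp (-H ^ 2) * D * (1 - Real.exp (-(2 * H ^ 2)))) * hsq
end
end

section
/- Let x > 0, h > 0, and N ≥ 1 an integer, and set τ_m := (m − 1/2)h. Then the truncation tail T_N := 2h·Σ_{m=N+1}^∞ f(τ_m) satisfies |T_N| ≤ (2h·τ_{N+1} + 1)·x·e^{-τ_{N+1}²} / (2π·τ_{N+1}·√(x⁴ + τ_{N+1}⁴)). -/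
noncomputable section

def τ (h : ℝ) (m : ℕ) : ℝ := ((m : ℝ) - 1 / 2) * h

lemma abs_f (x t : ℝ) (hx : 0 < x) :
    ‖f x t‖ = x / (2 * Real.pi) * Real.exp (-t ^ 2) / Real.sqrt (x ^ 4 + t ^ 4) := by
  have h1 : ((x:ℂ) ^ 2 + Complex.I * (t:ℂ) ^ 2) = ((x^2 : ℝ) : ℂ) + ((t^2 : ℝ) : ℂ) * Complex.I := by
    push_cast; ring
  simp only [f, norm_div, norm_mul, Complex.norm_exp, h1, Complex.norm_add_mul_I]
  have h2 : ((x^2:ℝ))^2 + ((t^2:ℝ))^2 = x^4 + t^4 := by ring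
  rw [h2]
  simp [Complex.mul_re, Complex.mul_im, Complex.add_re, Complex.add_im,
    abs_of_pos hx, abs_of_pos Real.pi_pos, ← Complex.ofReal_pow]

theorem stmt_3 (x h : ℝ) (hx : 0 < x) (hh : 0 < h) (N : ℕ) (hN : 1 ≤ N) :
    ‖2 * (h : ℂ) * ∑' j : ℕ, f x ((τ h (N + 1 + j) : ℝ))‖ ≤
      (2 * h * τ h (N + 1) + 1) * x * Real.exp (-(τ h (N + 1)) ^ 2) /
        (2 * Real.pi * τ h (N + 1) * Real.sqrt (x ^ 4 + (τ h (N + 1)) ^ 4)) := by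
  set a := τ h (N + 1) with ha_def
  have ha : 0 < a := by
    have h1 : (1:ℝ) ≤ N := by exact_mod_cast hN
    simp only [ha_def, τ]
    push_cast
    nlinarith
  have hτ : ∀ j : ℕ, τ h (N + 1 + j) = a + j * h := by
    intro j; simp only [ha_def, τ]; push_cast; ring
  set r : ℝ := Real.exp (-(2 * a * h)) with hr_def
  have hr0 : 0 < r := Real.exp_pos _
  have hr1 : r < 1 := Real.exp_lt_one_iff.mpr (by nlinarith)
  have h1r : 0 < 1 - r := by linarith
  have hsq : 0 < Real.sqrt (x ^ 4 + a ^ 4) := Real.sqrt_pos.mpr (by positivity)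
  set C : ℝ := x / (2 * Real.pi) * Real.exp (-a ^ 2) / Real.sqrt (x ^ 4 + a ^ 4) with hC_def
  have hC0 : 0 < C := by positivity
  have hbound : ∀ j : ℕ, ‖f x ((τ h (N + 1 + j) : ℝ))‖ ≤ C * r ^ j := by
    intro j
    rw [abs_f x _ hx, hτ j]
    have hja : 0 ≤ (j:ℝ) * h := by positivity
    have e1 : Real.exp (-(a + j*h) ^ 2) ≤ Real.exp (-a ^ 2) * r ^ j := by
      rw [hr_def, ← Real.exp_nat_mul, ← Real.exp_add, Real.exp_le_exp]
      nlinarith [sq_nonneg ((j:ℝ)*h)]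
    have e2 : Real.sqrt (x ^ 4 + a ^ 4) ≤ Real.sqrt (x ^ 4 + (a + j*h) ^ 4) := by
      apply Real.sqrt_le_sqrt
      nlinarith [pow_le_pow_left₀ ha.le (by linarith : a ≤ a + (j:ℝ)*h) 4]
    calc x / (2 * Real.pi) * Real.exp (-(a + j*h) ^ 2) / Real.sqrt (x ^ 4 + (a + j*h) ^ 4)
        ≤ x / (2 * Real.pi) * (Real.exp (-a ^ 2) * r ^ j) / Real.sqrt (x ^ 4 + a ^ 4) := by
          gcongr
      _ = C * r ^ j := by rw [hC_def]; ring
  have hsumgeo : Summable (fun j : ℕ => C * r ^ j) :=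
    (summable_geometric_of_lt_one hr0.le hr1).mul_left C
  have hsumf : Summable (fun j : ℕ => ‖f x ((τ h (N + 1 + j) : ℝ))‖) :=
    Summable.of_nonneg_of_le (fun j => norm_nonneg _) hbound hsumgeo
  have habs : ‖∑' j : ℕ, f x ((τ h (N + 1 + j) : ℝ))‖ ≤ C / (1 - r) := by
    calc ‖∑' j : ℕ, f x ((τ h (N + 1 + j) : ℝ))‖
        ≤ ∑' j : ℕ, ‖f x ((τ h (N + 1 + j) : ℝ))‖ := norm_tsum_le_tsum_norm hsumf
      _ ≤ ∑' j : ℕ, C * r ^ j := Summable.tsum_le_tsum hbound hsumf hsumgeo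
      _ = C / (1 - r) := by
          rw [tsum_mul_left, tsum_geometric_of_lt_one hr0.le hr1]
          ring
  have hu : (2 * a * h + 1) * r ≤ 1 := by
    have hexp := Real.add_one_le_exp (2 * a * h)
    have h2 : (2 * a * h + 1) * r ≤ Real.exp (2 * a * h) * r :=
      mul_le_mul_of_nonneg_right (by linarith) hr0.le
    rwa [hr_def, ← Real.exp_add, add_neg_cancel, Real.exp_zero] at h2
  have key : 2 * h / (1 - r) ≤ (2 * h * a + 1) / a := by
    rw [div_le_div_iff₀ h1r ha]
    nlinarith
  calc ‖2 * (h : ℂ) * ∑' j : ℕ, f x ((τ h (N + 1 + j) : ℝ))‖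
      = 2 * h * ‖∑' j : ℕ, f x ((τ h (N + 1 + j) : ℝ))‖ := by
        rw [norm_mul, norm_mul]
        simp [Complex.norm_real, abs_of_pos hh]
    _ ≤ 2 * h * (C / (1 - r)) := by
        apply mul_le_mul_of_nonneg_left habs (by positivity)
    _ = (2 * h / (1 - r)) * C := by ring
    _ ≤ ((2 * h * a + 1) / a) * C := by
        apply mul_le_mul_of_nonneg_right key hC0.le
    _ = (2 * h * a + 1) * x * Real.exp (-a ^ 2) /
        (2 * Real.pi * a * Real.sqrt (x ^ 4 + a ^ 4)) := by
        rw [hC_def]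
        field_simp
end
end

section
/- For every real y ≥ 0, (1 + π·y²)·e^{-2y²}·(1 + (4/π)·(∫_0^y e^{t²} dt)²) ≥ 1. -/
lemma aux_int (y : ℝ) (hy : 0 < y) :
    (Real.exp (y ^ 2) - 1) / (2 * y) ≤ ∫ t in (0 : ℝ)..y, Real.exp (t ^ 2) := by
  have h1 : ∫ t in (0 : ℝ)..y, t * Real.exp (t ^ 2) = (Real.exp (y ^ 2) - 1) / 2 := by
    have hd : ∀ t ∈ Set.uIcc (0:ℝ) y,
        HasDerivAt (fun t => Real.exp (t ^ 2) / 2) (t * Real.exp (t ^ 2)) t := by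
      intro t _
      have := ((hasDerivAt_pow 2 t).exp).div_const 2
      convert this using 1
      exacts [rfl, rfl, by ring]
    rw [intervalIntegral.integral_eq_sub_of_hasDerivAt hd
      (Continuous.intervalIntegrable (by continuity) _ _)]
    simp [Real.exp_zero]
    ring
  have h2 : ∫ t in (0 : ℝ)..y, t * Real.exp (t ^ 2) ≤
      ∫ t in (0 : ℝ)..y, y * Real.exp (t ^ 2) := by
    apply intervalIntegral.integral_mono_on hy.le
      (Continuous.intervalIntegrable (by continuity) _ _)
      (Continuous.intervalIntegrable (by continuity) _ _)
    intro t ht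
    have ht1 : t ≤ y := ht.2
    have := Real.exp_pos (t ^ 2)
    nlinarith
  rw [intervalIntegral.integral_const_mul] at h2
  rw [h1] at h2
  rw [div_le_iff₀ (by positivity)]
  nlinarith

theorem stmt_18 (y : ℝ) (hy : 0 ≤ y) :
    1 ≤ (1 + Real.pi * y ^ 2) * Real.exp (-2 * y ^ 2) *
      (1 + 4 / Real.pi * (∫ t in (0 : ℝ)..y, Real.exp (t ^ 2)) ^ 2) := by
  rcases eq_or_lt_of_le hy with h0 | h0
  · simp [← h0]
  · set F := ∫ t in (0 : ℝ)..y, Real.exp (t ^ 2) with hF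
    set E := Real.exp (y ^ 2) with hE
    have hE1 : 1 ≤ E := by
      rw [hE]; have : (0:ℝ) ≤ y ^ 2 := by positivity
      simpa using Real.one_le_exp this
    have hkey : (E - 1) / (2 * y) ≤ F := aux_int y h0
    have hF0 : 0 ≤ F := le_trans (div_nonneg (by linarith) (by positivity)) hkey
    have hpi : 0 < Real.pi := Real.pi_pos
    have hexp : Real.exp (-2 * y ^ 2) * E ^ 2 = 1 := by
      rw [hE, pow_two (Real.exp (y ^ 2)), ← Real.exp_add, ← Real.exp_add]
      norm_num
      ring
    have hEpos : 0 < E := lt_of_lt_of_le one_pos hE1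
    rw [div_le_iff₀ (by positivity)] at hkey
    -- goal: 1 ≤ (1 + π y²) * (1/E²) * (1 + 4/π F²)
    have hmain : E ^ 2 ≤ (1 + Real.pi * y ^ 2) * (1 + 4 / Real.pi * F ^ 2) := by
      have hF2 : (E - 1) ^ 2 ≤ (F * (2 * y)) ^ 2 := by
        apply sq_le_sq'
        · nlinarith
        · exact hkey
      have hamgm : (E - 1) ^ 2 + (Real.pi * y ^ 2) ^ 2 ≥ 2 * (E - 1) * (Real.pi * y ^ 2) := by
        nlinarith [sq_nonneg (E - 1 - Real.pi * y ^ 2)]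
      have h4 : 4 / Real.pi * F ^ 2 ≥ (E - 1) ^ 2 / (Real.pi * y ^ 2) := by
        rw [ge_iff_le, div_le_iff₀ (by positivity),
          (show 4 / Real.pi * F ^ 2 * (Real.pi * y ^ 2) = (F * (2 * y)) ^ 2 by
            field_simp; ring)]
        exact hF2
      have h5 : (1 + Real.pi * y ^ 2) * (1 + (E - 1) ^ 2 / (Real.pi * y ^ 2)) ≥ E ^ 2 := by
        have hs : 0 < Real.pi * y ^ 2 := by positivity
        rw [ge_iff_le]
        have expand : (1 + Real.pi * y ^ 2) * (1 + (E - 1) ^ 2 / (Real.pi * y ^ 2))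
            = 1 + Real.pi * y ^ 2 + (E - 1) ^ 2 / (Real.pi * y ^ 2) + (E - 1) ^ 2 := by
          field_simp; ring
        rw [expand]
        have hdiv : (E - 1) ^ 2 / (Real.pi * y ^ 2) ≥ 2 * (E - 1) - Real.pi * y ^ 2 := by
          rw [ge_iff_le, ← sub_nonneg]
          have : (E - 1) ^ 2 / (Real.pi * y ^ 2) - (2 * (E - 1) - Real.pi * y ^ 2)
              = (E - 1 - Real.pi * y ^ 2) ^ 2 / (Real.pi * y ^ 2) := by
            field_simp; ring
          rw [this]; positivity
        nlinarith
      nlinarith [sq_nonneg y, mul_pos hpi (mul_pos h0 h0)]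
    have hexppos : 0 < Real.exp (-2 * y ^ 2) := Real.exp_pos _
    calc (1:ℝ) = E ^ 2 * Real.exp (-2 * y ^ 2) := by rw [mul_comm, hexp]
    _ ≤ (1 + Real.pi * y ^ 2) * (1 + 4 / Real.pi * F ^ 2) * Real.exp (-2 * y ^ 2) := by
        apply mul_le_mul_of_nonneg_right hmain (by positivity)
    _ = (1 + Real.pi * y ^ 2) * Real.exp (-2 * y ^ 2) * (1 + 4 / Real.pi * F ^ 2) := by ring
end

section
/- For every real y, e^{-2y²}·(1 + (4/π)·(∫_0^y e^{t²} dt)²) ≤ 2/π + (1 − 2/π)·e^{-2y²}; in particular e^{-2y²}·(1 + (4/π)·(∫_0^y e^{t²} dt)²) ≤ 1. -/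
noncomputable def Faux (y : ℝ) : ℝ := ∫ t in (0:ℝ)..y, Real.exp (t ^ 2)

lemma Faux_cont : Continuous fun t : ℝ => Real.exp (t ^ 2) :=
  Real.continuous_exp.comp (continuous_pow 2)

lemma Faux_hasDerivAt (y : ℝ) : HasDerivAt Faux (Real.exp (y ^ 2)) y :=
  intervalIntegral.integral_hasDerivAt_right (Faux_cont.intervalIntegrable 0 y)
    (Faux_cont.stronglyMeasurableAtFilter _ _) Faux_cont.continuousAt

lemma Faux_le {y : ℝ} (hy : 0 ≤ y) : Faux y ≤ y * Real.exp (y ^ 2) := by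
  have h : Faux y ≤ ∫ _t in (0:ℝ)..y, Real.exp (y ^ 2) := by
    apply intervalIntegral.integral_mono_on hy (Faux_cont.intervalIntegrable 0 y)
      intervalIntegrable_const
    intro t ht
    exact Real.exp_le_exp.mpr (by nlinarith [ht.1, ht.2])
  simpa using h

lemma Faux_sq {y : ℝ} (hy : 0 ≤ y) : Faux y ^ 2 ≤ (Real.exp (2 * y ^ 2) - 1) / 2 := by
  set h : ℝ → ℝ := fun x => (Real.exp (2 * x ^ 2) - 1) / 2 - Faux x ^ 2 with hh
  have hderiv : ∀ x : ℝ,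
      HasDerivAt h (2 * x * Real.exp (2 * x ^ 2) - 2 * Faux x * Real.exp (x ^ 2)) x := by
    intro x
    have h1 : HasDerivAt (fun z : ℝ => (Real.exp (2 * z ^ 2) - 1) / 2)
        (2 * x * Real.exp (2 * x ^ 2)) x := by
      have h2 : HasDerivAt (fun z : ℝ => 2 * z ^ 2) (4 * x) x := by
        have h := (hasDerivAt_pow 2 x).const_mul (2:ℝ)
        refine h.congr_deriv ?_
        ring
      have h3 := (h2.exp.sub_const 1).div_const 2
      refine h3.congr_deriv ?_
      ring
    have h4 : HasDerivAt (fun z : ℝ => Faux z ^ 2) (2 * Faux x * Real.exp (x ^ 2)) x := by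
      have := (Faux_hasDerivAt x).pow 2
      refine this.congr_deriv ?_
      ring
    exact h1.sub h4
  have mono : MonotoneOn h (Set.Ici (0:ℝ)) := by
    apply monotoneOn_of_deriv_nonneg (convex_Ici 0)
    · exact fun x _ => ((hderiv x).differentiableAt.continuousAt).continuousWithinAt
    · exact fun x _ => (hderiv x).differentiableAt.differentiableWithinAt
    · intro x hx
      rw [(hderiv x).deriv]
      have hx0 : (0:ℝ) ≤ x := le_of_lt (by simpa using hx)
      have hF := Faux_le hx0
      have hexp : Real.exp (2 * x ^ 2) = Real.exp (x ^ 2) * Real.exp (x ^ 2) := by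
        rw [two_mul, Real.exp_add]
      nlinarith [Real.exp_pos (x ^ 2)]
  have h0 : h 0 = 0 := by simp [hh, Faux]
  have h2 := mono Set.self_mem_Ici (Set.mem_Ici.mpr hy) hy
  rw [h0] at h2
  simp only [hh] at h2
  linarith

lemma Faux_neg (y : ℝ) : Faux (-y) = - Faux y := by
  unfold Faux
  rw [intervalIntegral.integral_symm]
  congr 1
  have := intervalIntegral.integral_comp_neg (a := 0) (b := y)
    (fun t : ℝ => Real.exp (t ^ 2))
  simpa [neg_sq] using this.symm

lemma Faux_sq_all (y : ℝ) : Faux y ^ 2 ≤ (Real.exp (2 * y ^ 2) - 1) / 2 := by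
  rcases le_total 0 y with hy | hy
  · exact Faux_sq hy
  · have := Faux_sq (y := -y) (by linarith)
    simpa [Faux_neg, neg_sq] using this

theorem stmt_19 (y : ℝ) :
    Real.exp (-2 * y ^ 2) * (1 + 4 / Real.pi * (∫ t in (0 : ℝ)..y, Real.exp (t ^ 2)) ^ 2) ≤
        2 / Real.pi + (1 - 2 / Real.pi) * Real.exp (-2 * y ^ 2) ∧
      Real.exp (-2 * y ^ 2) * (1 + 4 / Real.pi * (∫ t in (0 : ℝ)..y, Real.exp (t ^ 2)) ^ 2) ≤ 1 := by
  have harg : (-2:ℝ) * y ^ 2 = -(2 * y ^ 2) := by ring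
  rw [harg, Real.exp_neg]
  set X := Real.exp (2 * y ^ 2) with hX
  set I := ∫ t in (0 : ℝ)..y, Real.exp (t ^ 2) with hI
  have hIsq : I ^ 2 ≤ (X - 1) / 2 := Faux_sq_all y
  have hX1 : (1:ℝ) ≤ X := Real.one_le_exp (by positivity)
  have hX0 : (0:ℝ) < X := lt_of_lt_of_le one_pos hX1
  have hpi : (2:ℝ) ≤ Real.pi := Real.two_le_pi
  have hpi0 : (0:ℝ) < Real.pi := Real.pi_pos
  have hπX : (0:ℝ) < Real.pi * X := by positivity
  have e1 : Real.pi * X * (X⁻¹ * (1 + 4 / Real.pi * I ^ 2)) = Real.pi + 4 * I ^ 2 := by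
    field_simp
  constructor
  · rw [← mul_le_mul_iff_right₀ hπX, e1]
    have e2 : Real.pi * X * (2 / Real.pi + (1 - 2 / Real.pi) * X⁻¹) =
        2 * X + (Real.pi - 2) := by
      field_simp
    rw [e2]
    linarith
  · rw [← mul_le_mul_iff_right₀ hπX, e1, mul_one]
    nlinarith
end
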